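/- For two probability mass functions g and f on a finite set with f and g strictly positive, tuning parameters satisfying A = 1+λ(1-β) > 0 and B = β-λ(1-β) > 0, the S-divergence S_{β,λ}(g,f) = (1/A) Σ f^{1+β} − ((1+β)/(AB)) Σ f^B g^A + (1/B) Σ g^{1+β} is nonnegative, and equals zero if and only if g = f. -/

import Mathlib

open Finset

/-- The S-divergence `S_{β,λ}(g, f)` in terms of `A = 1 + λ(1-β)` and `B = β - λ(1-β)`. -/
noncomputable def sDiv {Y : Type*} [Fintype Y] (A B beta : ℝ) (g f : Y → ℝ) : ℝ :=
  (1 / A) * ∑ u, f u ^ (1 + beta)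
    - ((1 + beta) / (A * B)) * ∑ u, f u ^ B * g u ^ A
    + (1 / B) * ∑ u, g u ^ (1 + beta)

/-- Strict weighted AM-GM for two positive reals. -/
lemma strict_amgm2 {w₁ w₂ a b : ℝ} (hw₁ : 0 < w₁) (hw₂ : 0 < w₂) (hw : w₁ + w₂ = 1)
    (ha : 0 < a) (hb : 0 < b) (hab : a ≠ b) :
    a ^ w₁ * b ^ w₂ < w₁ * a + w₂ * b := by
  have hlog := strictConcaveOn_log_Ioi.2 (Set.mem_Ioi.2 ha) (Set.mem_Ioi.2 hb) hab hw₁ hw₂ hw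
  simp only [smul_eq_mul] at hlog
  have h1 : a ^ w₁ * b ^ w₂ = Real.exp (w₁ * Real.log a + w₂ * Real.log b) := by
    rw [Real.exp_add, ← Real.log_rpow ha, ← Real.log_rpow hb, Real.exp_log (by positivity),
      Real.exp_log (by positivity)]
  rw [h1]
  calc Real.exp (w₁ * Real.log a + w₂ * Real.log b) < Real.exp (Real.log (w₁ * a + w₂ * b)) :=
        Real.exp_lt_exp.2 hlog
    _ = w₁ * a + w₂ * b := Real.exp_log (by positivity)

/-- The S-divergence between two strictly positive PMFs on a finite set is nonnegative,
and equals zero iff the PMFs coincide. -/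
theorem sDiv_nonneg_eq_zero_iff {Y : Type*} [Fintype Y] (beta lam A B : ℝ)
    (hbeta0 : 0 ≤ beta) (hbeta1 : beta ≤ 1)
    (hA : A = 1 + lam * (1 - beta)) (hB : B = beta - lam * (1 - beta))
    (hApos : 0 < A) (hBpos : 0 < B)
    (g f : Y → ℝ) (hg : ∀ u, 0 < g u) (hf : ∀ u, 0 < f u)
    (hgsum : ∑ u, g u = 1) (hfsum : ∑ u, f u = 1) :
    0 ≤ sDiv A B beta g f ∧ (sDiv A B beta g f = 0 ↔ g = f) := by
  have hAB : A + B = 1 + beta := by rw [hA, hB]; ring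
  have hβpos : (0:ℝ) < 1 + beta := by linarith
  set T : Y → ℝ := fun u =>
    (1 / A) * f u ^ (1 + beta) - ((1 + beta) / (A * B)) * (f u ^ B * g u ^ A)
      + (1 / B) * g u ^ (1 + beta) with hT
  have hsum : sDiv A B beta g f = ∑ u, T u := by
    simp only [sDiv, hT, Finset.mul_sum, Finset.sum_add_distrib, Finset.sum_sub_distrib]
  -- pointwise analysis
  have hpt : ∀ u, (f u ≠ g u → 0 < T u) ∧ (f u = g u → T u = 0) := by
    intro u
    have ha := hf u
    have hb := hg u
    constructor
    · intro hne
      have key : f u ^ B * g u ^ A <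
          (B / (1 + beta)) * f u ^ (1 + beta) + (A / (1 + beta)) * g u ^ (1 + beta) := by
        have h1 : (f u ^ (1 + beta)) ^ (B / (1 + beta)) = f u ^ B := by
          rw [← Real.rpow_mul ha.le]; congr 1; field_simp
        have h2 : (g u ^ (1 + beta)) ^ (A / (1 + beta)) = g u ^ A := by
          rw [← Real.rpow_mul hb.le]; congr 1; field_simp
        have hne' : f u ^ (1 + beta) ≠ g u ^ (1 + beta) := by
          rcases lt_trichotomy (f u) (g u) with h | h | h
          · exact ne_of_lt (Real.rpow_lt_rpow ha.le h hβpos)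
          · exact absurd h hne
          · exact (ne_of_lt (Real.rpow_lt_rpow hb.le h hβpos)).symm
        have := strict_amgm2 (w₁ := B / (1 + beta)) (w₂ := A / (1 + beta))
          (by positivity) (by positivity) (by field_simp; linarith)
          (by positivity) (by positivity) hne'
        rwa [h1, h2] at this
      have hABpos : 0 < A * B := by positivity
      have : ((1 + beta) / (A * B)) * (f u ^ B * g u ^ A) <
          ((1 + beta) / (A * B)) *
            ((B / (1 + beta)) * f u ^ (1 + beta) + (A / (1 + beta)) * g u ^ (1 + beta)) :=
        mul_lt_mul_of_pos_left key (by positivity)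
      have heq : ((1 + beta) / (A * B)) *
          ((B / (1 + beta)) * f u ^ (1 + beta) + (A / (1 + beta)) * g u ^ (1 + beta))
          = (1 / A) * f u ^ (1 + beta) + (1 / B) * g u ^ (1 + beta) := by
        field_simp
      rw [heq] at this
      simp only [hT]
      linarith
    · intro heq
      simp only [hT, heq]
      have h1 : g u ^ B * g u ^ A = g u ^ (1 + beta) := by
        rw [← Real.rpow_add hb, ← hAB, add_comm]
      rw [h1]
      field_simp
      linear_combination g u ^ (1 + beta) * hAB
  have hnonneg : ∀ u ∈ Finset.univ, 0 ≤ T u := by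
    intro u _
    rcases eq_or_ne (f u) (g u) with h | h
    · exact le_of_eq ((hpt u).2 h).symm
    · exact le_of_lt ((hpt u).1 h)
  constructor
  · rw [hsum]; exact Finset.sum_nonneg hnonneg
  · rw [hsum]
    constructor
    · intro h0
      funext u
      have : T u = 0 := (Finset.sum_eq_zero_iff_of_nonneg hnonneg).1 h0 u (Finset.mem_univ u)
      by_contra hne
      have := (hpt u).1 (fun h => hne h.symm)
      linarith
    · intro hgf
      apply Finset.sum_eq_zero
      intro u _
      exact (hpt u).2 (by rw [hgf])
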